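/- arXiv:2211.04691 — 2 statements merged into one kernel-verified Lean document; each statement's English description precedes it below -/
import Mathlib

section
/- Let P(x,y,z) = (f·x/z, f·y/z) with f > 0. Fix z > 0, and for each integer pair (k,l) let T_{kl} be the unique point at depth z with P(T_{kl}) = (k + 1/2, l + 1/2). Then for any point p at depth z with ⌊P(p)⌋ = (k,l), the point T_{kl} is the strictly nearest point to p among all {T_{ij}} whenever P(p) is not on the boundary of the unit cell, i.e., the cell {q at depth z : ⌊P(q)⌋ = (k,l)} is contained in the closed Voronoi cell of T_{kl} with respect to the set {T_{ij}}_{(i,j)∈ℤ²}. -/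
/-- Euclidean distance in the plane at fixed depth. -/
noncomputable def dist2 (a b : ℝ × ℝ) : ℝ :=
  Real.sqrt ((a.1 - b.1) ^ 2 + (a.2 - b.2) ^ 2)

/-- XY-adjustment: the point at depth `z` projecting to the center `(k+1/2, l+1/2)`
of the screen cell `(k,l)` (identified with its XY-coordinates). -/
noncomputable def XYadj (f z : ℝ) (k l : ℤ) : ℝ × ℝ :=
  (((k : ℝ) + 1 / 2) * z / f, ((l : ℝ) + 1 / 2) * z / f)

lemma key_le (u : ℝ) (k i : ℤ) (hk : ⌊u⌋ = k) :
    (u - ((k:ℝ) + 1/2))^2 ≤ (u - ((i:ℝ) + 1/2))^2 := by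
  rw [Int.floor_eq_iff] at hk
  obtain ⟨h1, h2⟩ := hk
  rcases lt_trichotomy i k with h | h | h
  · have : (i:ℝ) ≤ (k:ℝ) - 1 := by exact_mod_cast Int.le_sub_one_iff.mpr h
    nlinarith
  · subst h; rfl
  · have : (k:ℝ) + 1 ≤ (i:ℝ) := by exact_mod_cast h
    nlinarith

lemma key_lt (u : ℝ) (k i : ℤ) (hk : ⌊u⌋ = k) (hu : u ≠ (k:ℝ)) (hi : i ≠ k) :
    (u - ((k:ℝ) + 1/2))^2 < (u - ((i:ℝ) + 1/2))^2 := by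
  rw [Int.floor_eq_iff] at hk
  obtain ⟨h1, h2⟩ := hk
  have h1' : (k:ℝ) < u := lt_of_le_of_ne h1 (Ne.symm hu)
  rcases lt_or_gt_of_ne hi with h | h
  · have : (i:ℝ) ≤ (k:ℝ) - 1 := by exact_mod_cast Int.le_sub_one_iff.mpr h
    nlinarith
  · have : (k:ℝ) + 1 ≤ (i:ℝ) := by exact_mod_cast h
    nlinarith

theorem cell_in_voronoi (f z : ℝ) (hf : 0 < f) (hz : 0 < z) (k l : ℤ)
    (p : ℝ × ℝ) (hp : ⌊f * p.1 / z⌋ = k ∧ ⌊f * p.2 / z⌋ = l) :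
    (∀ i j : ℤ, dist2 p (XYadj f z k l) ≤ dist2 p (XYadj f z i j)) ∧
    ((f * p.1 / z ≠ (k : ℝ) ∧ f * p.2 / z ≠ (l : ℝ)) →
      ∀ i j : ℤ, (i, j) ≠ (k, l) →
        dist2 p (XYadj f z k l) < dist2 p (XYadj f z i j)) := by
  obtain ⟨hpk, hpl⟩ := hp
  have hf0 : f ≠ 0 := ne_of_gt hf
  have hz0 : z ≠ 0 := ne_of_gt hz
  set u := f * p.1 / z with hu
  set v := f * p.2 / z with hv
  have hc : (0:ℝ) < (z/f)^2 := by positivity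
  have hform : ∀ i j : ℤ,
      (p.1 - (((i:ℝ) + 1/2) * z / f))^2 + (p.2 - (((j:ℝ) + 1/2) * z / f))^2
        = (z/f)^2 * ((u - ((i:ℝ)+1/2))^2 + (v - ((j:ℝ)+1/2))^2) := by
    intro i j
    rw [hu, hv]
    field_simp
  constructor
  · intro i j
    unfold dist2 XYadj
    apply Real.sqrt_le_sqrt
    simp only [hform]
    apply mul_le_mul_of_nonneg_left _ (le_of_lt hc)
    exact add_le_add (key_le u k i hpk) (key_le v l j hpl)
  · rintro ⟨hu1, hv1⟩ i j hne
    unfold dist2 XYadj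
    apply Real.sqrt_lt_sqrt (by positivity)
    simp only [hform]
    apply mul_lt_mul_of_pos_left _ hc
    have hne' : i ≠ k ∨ j ≠ l := by
      by_contra h
      push_neg at h
      exact hne (by rw [h.1, h.2])
    rcases hne' with h | h
    · exact add_lt_add_of_lt_of_le (key_lt u k i hpk hu1 h) (key_le v l j hpl)
    · exact add_lt_add_of_le_of_lt (key_le u k i hpk) (key_lt v l j hpl hv1 h)
end

section
/- Let P(x,y,z) = (f·x/z, f·y/z) with f > 0 and fix z > 0. Let p' = (x+a, y+b, z) and p̃ = (x+ã, y+b̃, z). If ⌊P(p')⌋ = ⌊P(p̃)⌋ then ‖(a,b) - (ã,b̃)‖∞ < z/f. -/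
theorem same_cell_translation_bound (f z x y a b ta tb : ℝ)
    (hf : 0 < f) (hz : 0 < z)
    (hfloor : ⌊f * (x + a) / z⌋ = ⌊f * (x + ta) / z⌋ ∧
              ⌊f * (y + b) / z⌋ = ⌊f * (y + tb) / z⌋) :
    |a - ta| < z / f ∧ |b - tb| < z / f := by
  obtain ⟨h1, h2⟩ := hfloor
  have key : ∀ w u v : ℝ, ⌊f * (w + u) / z⌋ = ⌊f * (w + v) / z⌋ → |u - v| < z / f := by
    intro w u v h
    have h3 : |f * (w + u) / z - f * (w + v) / z| < 1 :=
      Int.abs_sub_lt_one_of_floor_eq_floor h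
    have heq : f * (w + u) / z - f * (w + v) / z = (u - v) * (f / z) := by ring
    rw [heq, abs_mul, abs_of_pos (div_pos hf hz)] at h3
    have h4 := (lt_div_iff₀ (div_pos hf hz)).mpr h3
    rwa [one_div_div] at h4
  exact ⟨key x a ta h1, key y b tb h2⟩
end
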